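/- Let B be an n×n symmetric matrix over a field F. If every quasi-principal minor of B of order k is zero (for some k with 1 ≤ k ≤ n), then for every j with k ≤ j ≤ n, every quasi-principal minor of B of order j is zero. -/
import Mathlib


open Matrix

/-- The minor of a square matrix `B` lying in the rows indexed by `α` and the columns
indexed by `β` (each listed in increasing order); junk value `0` if `α.card ≠ β.card`. -/
def qMinor {R : Type*} [CommRing R] {m : Type*} [Fintype m] [LinearOrder m]
    (B : Matrix m m R) (α β : Finset m) : R :=
  if h : β.card = α.card then
    (Matrix.of fun i j : Fin α.card =>
      B (α.orderEmbOfFin rfl i) (β.orderEmbOfFin h j)).det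
  else 0

/-- `α` and `β` index a quasi-principal submatrix of order `k`, i.e.
`|α| = |β| = k` and `k - 1 ≤ |α ∩ β| (≤ k)`. -/
def IsQPPair {m : Type*} [DecidableEq m] (k : ℕ) (α β : Finset m) : Prop :=
  α.card = k ∧ β.card = k ∧ k - 1 ≤ (α ∩ β).card

/-- All quasi-principal minors of `B` of order `k` are nonzero. -/
def QPAllNonzero {R : Type*} [CommRing R] {m : Type*} [Fintype m] [LinearOrder m]
    (B : Matrix m m R) (k : ℕ) : Prop :=
  ∀ α β : Finset m, IsQPPair k α β → qMinor B α β ≠ 0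

/-- All quasi-principal minors of `B` of order `k` are zero. -/
def QPAllZero {R : Type*} [CommRing R] {m : Type*} [Fintype m] [LinearOrder m]
    (B : Matrix m m R) (k : ℕ) : Prop :=
  ∀ α β : Finset m, IsQPPair k α β → qMinor B α β = 0

/-- The three possible letters of a qpr-sequence. -/
inductive QPR : Type
  | A
  | S
  | N
deriving DecidableEq

open Classical in
/-- The letter of the qpr-sequence of `B` corresponding to order `k`:
`A` if all quasi-principal minors of order `k` are nonzero, `N` if all are zero,
and `S` otherwise. -/
noncomputable def qprEntry {R : Type*} [CommRing R] {m : Type*} [Fintype m] [LinearOrder m]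
    (B : Matrix m m R) (k : ℕ) : QPR :=
  if QPAllNonzero B k then QPR.A
  else if QPAllZero B k then QPR.N
  else QPR.S

/-- A sequence of letters `q 0, …, q (n-1)` (standing for `q_1 ⋯ q_n`) is attainable
over `F` if it is the qpr-sequence of an `n × n` symmetric matrix over `F`. -/
def Attainable (F : Type*) [Field F] {n : ℕ} (q : Fin n → QPR) : Prop :=
  ∃ B : Matrix (Fin n) (Fin n) F, B.IsSymm ∧ ∀ k : Fin n, qprEntry B ((k : ℕ) + 1) = q k

/-- The Schur complement `B/B[γ] = B[γᶜ] - B[γᶜ, γ] B[γ]⁻¹ B[γ, γᶜ]`,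
with rows and columns indexed by `γᶜ` (indexing inherited from `B`). -/
noncomputable def schurCompl {R : Type*} [CommRing R] {n : ℕ}
    (B : Matrix (Fin n) (Fin n) R) (γ : Finset (Fin n)) :
    Matrix ↥(γᶜ) ↥(γᶜ) R :=
  B.submatrix (fun i : ↥(γᶜ) => (i : Fin n)) (fun j : ↥(γᶜ) => (j : Fin n)) -
    B.submatrix (fun i : ↥(γᶜ) => (i : Fin n)) (fun j : ↥γ => (j : Fin n)) *
      (B.submatrix (fun i : ↥γ => (i : Fin n)) fun j : ↥γ => (j : Fin n))⁻¹ *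
      B.submatrix (fun i : ↥γ => (i : Fin n)) fun j : ↥(γᶜ) => (j : Fin n)

/-- The `(m+1) × (m+1)` matrix with block form `[[A, x], [yᵀ, b]]`. -/
def borderMat {R : Type*} [CommRing R] {m : ℕ} (A : Matrix (Fin m) (Fin m) R)
    (x y : Fin m → R) (b : R) : Matrix (Fin (m + 1)) (Fin (m + 1)) R :=
  Matrix.of fun i j =>
    if hi : (i : ℕ) < m then
      if hj : (j : ℕ) < m then A ⟨i, hi⟩ ⟨j, hj⟩ else x ⟨i, hi⟩
    else
      if hj : (j : ℕ) < m then y ⟨j, hj⟩ else b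

/-- `qMinor` computed via arbitrary strictly monotone enumerations. -/
lemma qMinor_eq_det {R : Type*} [CommRing R] {m : Type*} [Fintype m] [LinearOrder m]
    (B : Matrix m m R) {α β : Finset m} {c : ℕ} (hα : α.card = c) (hβ : β.card = c)
    (f g : Fin c → m) (hf : StrictMono f) (hg : StrictMono g)
    (hfα : ∀ x, f x ∈ α) (hgβ : ∀ x, g x ∈ β) :
    qMinor B α β = (Matrix.of fun i j : Fin c => B (f i) (g j)).det := by
  have h : β.card = α.card := hβ.trans hα.symm
  rw [qMinor, dif_pos h]
  have e : Fin c ≃ Fin α.card := finCongr hα.symm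
  have he : StrictMono fun i : Fin c => (finCongr hα.symm i : Fin α.card) :=
    fun a b hab => hab
  rw [← Matrix.det_submatrix_equiv_self (finCongr hα.symm)]
  congr 1
  have hf' : (fun i : Fin c => α.orderEmbOfFin rfl (finCongr hα.symm i)) = f := by
    rw [Finset.orderEmbOfFin_unique hα hfα hf]
    exact Finset.orderEmbOfFin_unique hα (fun x => α.orderEmbOfFin_mem rfl _)
      ((α.orderEmbOfFin rfl).strictMono.comp he)
  have hg' : (fun i : Fin c => β.orderEmbOfFin h (finCongr hα.symm i)) = g := by
    rw [Finset.orderEmbOfFin_unique hβ hgβ hg]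
    exact Finset.orderEmbOfFin_unique hβ (fun x => β.orderEmbOfFin_mem h _)
      ((β.orderEmbOfFin h).strictMono.comp he)
  ext i j
  simp only [Matrix.submatrix_apply, Matrix.of_apply]
  rw [← hf', ← hg']

/-- Cofactor expansion: if all one-row-one-column deletions of a quasi-principal minor
vanish, so does the minor. -/
lemma qMinor_eq_zero_of_erase {R : Type*} [CommRing R] {m : Type*} [Fintype m] [LinearOrder m]
    (B : Matrix m m R) {α β : Finset m} {c : ℕ} (hα : α.card = c + 1) (hβ : β.card = c + 1)
    {i : m} (hi : i ∈ α)
    (hz : ∀ q ∈ β, qMinor B (α.erase i) (β.erase q) = 0) :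
    qMinor B α β = 0 := by
  set f := α.orderEmbOfFin hα with hfdef
  set g := β.orderEmbOfFin hβ with hgdef
  rw [qMinor_eq_det B hα hβ f g f.strictMono g.strictMono
    (fun x => α.orderEmbOfFin_mem hα x) (fun x => β.orderEmbOfFin_mem hβ x)]
  obtain ⟨p, hp⟩ : ∃ p, f p = i := by
    have := α.range_orderEmbOfFin hα
    have : i ∈ Set.range f := by rw [hfdef, this]; exact_mod_cast hi
    exact this
  rw [Matrix.det_succ_row _ p]
  apply Finset.sum_eq_zero
  intro q _
  have hcα : (α.erase i).card = c := by
    rw [Finset.card_erase_of_mem hi, hα]; omega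
  have hcβ : (β.erase (g q)).card = c := by
    rw [Finset.card_erase_of_mem (β.orderEmbOfFin_mem hβ q), hβ]; omega
  have hsub : ((Matrix.of fun a b : Fin (c + 1) => B (f a) (g b)).submatrix
      p.succAbove q.succAbove).det = qMinor B (α.erase i) (β.erase (g q)) := by
    rw [qMinor_eq_det B hcα hcβ (f ∘ p.succAbove) (g ∘ q.succAbove)
      (f.strictMono.comp (Fin.strictMono_succAbove p))
      (g.strictMono.comp (Fin.strictMono_succAbove q))
      (fun x => Finset.mem_erase.2 ⟨by
        rw [← hp]; exact fun hcon => Fin.succAbove_ne p x (f.injective hcon), 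
        α.orderEmbOfFin_mem hα _⟩)
      (fun x => Finset.mem_erase.2 ⟨fun hcon => Fin.succAbove_ne q x (g.injective hcon),
        β.orderEmbOfFin_mem hβ _⟩)]
    rfl
  rw [hsub, hz (g q) (β.orderEmbOfFin_mem hβ q), mul_zero]
lemma qp_step {R : Type*} [CommRing R] {m : Type*} [Fintype m] [LinearOrder m]
    (B : Matrix m m R) {c : ℕ} (hQ : QPAllZero B c) : QPAllZero B (c + 1) := by
  rintro α β ⟨hα, hβ, hint⟩
  have hcard : (α \ β).card ≤ 1 := by
    have := Finset.card_sdiff_add_card_inter α β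
    omega
  obtain ⟨i, hiα, hsub⟩ : ∃ i ∈ α, α.erase i ⊆ β := by
    by_cases hd : (α \ β).Nonempty
    · obtain ⟨i, hi⟩ := hd
      refine ⟨i, (Finset.mem_sdiff.1 hi).1, fun x hx => ?_⟩
      obtain ⟨hxi, hxα⟩ := Finset.mem_erase.1 hx
      by_contra hxβ
      exact hxi (Finset.card_le_one.1 hcard x (Finset.mem_sdiff.2 ⟨hxα, hxβ⟩) i hi)
    · have hsub : α ⊆ β := by
        rw [Finset.not_nonempty_iff_eq_empty, Finset.sdiff_eq_empty_iff_subset] at hd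
        exact hd
      obtain ⟨i, hi⟩ : α.Nonempty := Finset.card_pos.1 (by omega)
      exact ⟨i, hi, (Finset.erase_subset _ _).trans hsub⟩
  apply qMinor_eq_zero_of_erase B hα hβ hiα
  intro q hq
  apply hQ
  refine ⟨by rw [Finset.card_erase_of_mem hiα, hα]; omega,
    by rw [Finset.card_erase_of_mem hq, hβ]; omega, ?_⟩
  have hss : (α.erase i).erase q ⊆ α.erase i ∩ β.erase q := by
    intro x hx
    obtain ⟨hxq, hx'⟩ := Finset.mem_erase.1 hx
    exact Finset.mem_inter.2 ⟨hx', Finset.mem_erase.2 ⟨hxq, hsub hx'⟩⟩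
  have h1 : (α.erase i).card = c := by rw [Finset.card_erase_of_mem hiα, hα]; omega
  have h2 := Finset.pred_card_le_card_erase (s := α.erase i) (a := q)
  have := Finset.card_le_card hss
  omega

/-- the `N` Theorem: if every quasi-principal minor of a symmetric matrix `B`
of order `k` is zero (`1 ≤ k ≤ n`), then for all `j` with `k ≤ j ≤ n`, every
quasi-principal minor of `B` of order `j` is zero. -/
theorem stmt_0 {F : Type*} [Field F] {n : ℕ} (B : Matrix (Fin n) (Fin n) F)
    (hB : B.IsSymm) (k : ℕ) (hk1 : 1 ≤ k) (hkn : k ≤ n) (h : QPAllZero B k) :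
    ∀ j : ℕ, k ≤ j → j ≤ n → QPAllZero B j := by
  intro j hkj hjn
  clear hjn
  induction j, hkj using Nat.le_induction with
  | base => exact h
  | succ j hkj ih => exact qp_step B ih
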